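/- For all integers λ1, λ2, β1, β2 with λ1 ≥ 0, λ2 ≥ 0, β2 ≥ 0, β1 − 2β2 ≥ 0, λ1 − β1 ≥ 0 and λ2 − β2 ≥ 0, one has N(λ1, λ2, β1, β2) = 1 + (3/2)β2 + (1/2)β2². -/

import Mathlib

/-- The number of quadruples `(a22, a11, a12, a13)` of nonnegative integers satisfying
Littelmann's inequalities for `so₅(ℂ)` together with the weight equations
`a22 + a12 = β1` and `a11 + a13 = β2`.  By Littelmann's results this is the dimension of
the weight space of weight `λ1·ω1 + λ2·ω2 − β1·α1 − β2·α2` in the irreducible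
`so₅(ℂ)`-module of highest weight `λ1·ω1 + λ2·ω2`. -/
noncomputable def weightMult (l1 l2 b1 b2 : ℤ) : ℕ :=
  Set.ncard {a : ℤ × ℤ × ℤ × ℤ |
    0 ≤ a.1 ∧ 0 ≤ a.2.1 ∧ 0 ≤ a.2.2.1 ∧ 0 ≤ a.2.2.2 ∧
    2 * a.2.1 ≥ a.2.2.1 ∧
    a.2.2.1 ≥ 2 * a.2.2.2 ∧
    a.2.2.2 ≤ l2 ∧
    a.2.2.1 ≤ l1 + 2 * a.2.2.2 ∧
    a.2.1 ≤ l2 + a.2.2.1 - 2 * a.2.2.2 ∧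
    a.1 ≤ l1 + 2 * a.2.1 - 2 * a.2.2.1 + 2 * a.2.2.2 ∧
    a.1 + a.2.2.1 = b1 ∧
    a.2.1 + a.2.2.2 = b2}

lemma aux_sum (m : ℕ) :
    2 * (∑ t ∈ Finset.range (m+1), (2*(m:ℤ) - 4*t + 1).toNat) = (m+1)*(m+2) := by
  induction m using Nat.twoStepInduction with
  | zero => norm_num
  | one => decide
  | more n ih _ =>
    rw [Finset.sum_range_succ' _ (n+2), Finset.sum_range_succ]
    have e1 : ∀ t : ℕ, (2*((n+2 : ℕ):ℤ) - 4*((t+1 : ℕ):ℤ) + 1).toNat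
        = (2*(n:ℤ) - 4*(t:ℤ) + 1).toNat := by
      intro t; congr 1; push_cast; ring
    simp only [e1]
    have e2 : (2*(n:ℤ) - 4*((n+1 : ℕ):ℤ) + 1).toNat = 0 := by push_cast; omega
    rw [e2]
    have e3 : (2*((n+2 : ℕ):ℤ) - 4*((0 : ℕ):ℤ) + 1).toNat = 2*n+5 := by push_cast; omega
    rw [e3]
    nlinarith [ih]

theorem weightMult_on_cone_f5 (l1 l2 b1 b2 : ℤ)
    (h0 : 0 ≤ l1)
    (h1 : 0 ≤ l2)
    (h2 : 0 ≤ b2)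
    (h3 : 0 ≤ b1 - 2*b2)
    (h4 : 0 ≤ l1 - b1)
    (h5 : 0 ≤ l2 - b2) :
    (weightMult l1 l2 b1 b2 : ℚ) = 1 + (3/2)*b2 + (1/2)*b2^2 := by
  classical
  set G : Finset ((_ : ℤ) × ℤ) :=
    (Finset.Icc (0:ℤ) b2).sigma (fun t => Finset.Icc (2*t) (2*b2 - 2*t)) with hG
  set f : ((_ : ℤ) × ℤ) → ℤ × ℤ × ℤ × ℤ := fun p => (b1 - p.2, b2 - p.1, p.2, p.1) with hf
  have hset : {a : ℤ × ℤ × ℤ × ℤ |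
      0 ≤ a.1 ∧ 0 ≤ a.2.1 ∧ 0 ≤ a.2.2.1 ∧ 0 ≤ a.2.2.2 ∧
      2 * a.2.1 ≥ a.2.2.1 ∧
      a.2.2.1 ≥ 2 * a.2.2.2 ∧
      a.2.2.2 ≤ l2 ∧
      a.2.2.1 ≤ l1 + 2 * a.2.2.2 ∧
      a.2.1 ≤ l2 + a.2.2.1 - 2 * a.2.2.2 ∧
      a.1 ≤ l1 + 2 * a.2.1 - 2 * a.2.2.1 + 2 * a.2.2.2 ∧
      a.1 + a.2.2.1 = b1 ∧
      a.2.1 + a.2.2.2 = b2} = f '' ↑G := by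
    ext a
    simp only [Set.mem_setOf_eq, Set.mem_image, Finset.coe_sigma, Set.mem_sigma_iff,
      Finset.mem_coe, Finset.mem_Icc, hf, hG, Finset.mem_sigma]
    constructor
    · rintro ⟨c1, c2, c3, c4, c5, c6, c7, c8, c9, c10, c11, c12⟩
      obtain ⟨x, y, z, w⟩ := a
      dsimp only at *
      refine ⟨⟨w, z⟩, ⟨⟨show (0:ℤ) ≤ w by omega, show w ≤ b2 by omega⟩,
        show 2*w ≤ z by omega, show z ≤ 2*b2 - 2*w by omega⟩, ?_⟩
      show (b1 - z, b2 - w, z, w) = (x, y, z, w)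
      simp only [Prod.mk.injEq]
      exact ⟨by omega, by omega, trivial⟩
    · rintro ⟨⟨t, s⟩, hmem, rfl⟩
      dsimp only at hmem ⊢
      omega
  have hinj : Set.InjOn f ↑G := by
    rintro ⟨t1, s1⟩ - ⟨t2, s2⟩ - h
    simp only [hf, Prod.mk.injEq] at h
    obtain ⟨-, -, rfl, rfl⟩ := h
    rfl
  have hcard : weightMult l1 l2 b1 b2 = G.card := by
    rw [weightMult, hset, Set.ncard_image_of_injOn hinj, Set.ncard_coe_finset]
  have hGcard : G.card = ∑ t ∈ Finset.Icc (0:ℤ) b2, (2*b2 - 2*t + 1 - 2*t).toNat := by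
    rw [hG, Finset.card_sigma]
    refine Finset.sum_congr rfl fun t _ => ?_
    rw [Int.card_Icc]
  -- convert the Icc-sum over ℤ to a range-sum over ℕ
  set n : ℕ := b2.toNat with hn
  have hb2 : (n : ℤ) = b2 := Int.toNat_of_nonneg h2
  have hsum : ∑ t ∈ Finset.Icc (0:ℤ) b2, (2*b2 - 2*t + 1 - 2*t).toNat
      = ∑ t ∈ Finset.range (n+1), (2*(n:ℤ) - 4*t + 1).toNat := by
    refine Finset.sum_nbij' (fun t => t.toNat) (fun t => (t : ℤ)) ?_ ?_ ?_ ?_ ?_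
    · intro t ht
      try dsimp only
      rw [Finset.mem_Icc] at ht
      rw [Finset.mem_range]
      omega
    · intro t ht
      try dsimp only
      rw [Finset.mem_range] at ht
      rw [Finset.mem_Icc]
      omega
    · intro t ht
      try dsimp only
      rw [Finset.mem_Icc] at ht
      omega
    · intro t ht
      try dsimp only
      rw [Finset.mem_range] at ht
      omega
    · intro t ht
      try dsimp only
      rw [Finset.mem_Icc] at ht
      congr 1
      omega
  have hfinal : 2 * weightMult l1 l2 b1 b2 = (n+1)*(n+2) := by
    rw [hcard, hGcard, hsum, aux_sum]
  have : (2 : ℚ) * (weightMult l1 l2 b1 b2 : ℚ) = ((n:ℚ)+1)*((n:ℚ)+2) := by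
    exact_mod_cast congrArg (Nat.cast : ℕ → ℚ) hfinal
  have hb2q : ((n : ℤ) : ℚ) = (b2 : ℚ) := by exact_mod_cast congrArg (Int.cast : ℤ → ℚ) hb2
  push_cast at this hb2q
  rw [hb2q] at this
  nlinarith [this]
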